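/- The random variable Ω = arctan((4/3)|cos θ|), with θ uniform on [0, 2π), has probability density f(ω) = (6/π)·1/(cos(ω)²·√(16 - 9 tan(ω)²)) on the interval 0 < ω < 2 arctan(1/2). -/

import Mathlib

open Real MeasureTheory

lemma kh_two_arctan_half : 2 * arctan (1/2) = arctan (4/3) := by
  have h0 : (0:ℝ) < arctan (1/2) := by
    have := arctan_strictMono (show (0:ℝ) < 1/2 by norm_num); rwa [arctan_zero] at this
  have h1 : arctan (1/2) < π/4 := by
    have := arctan_strictMono (show (1/2:ℝ) < 1 by norm_num)
    rwa [arctan_one] at this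
  have h2 : tan (2 * arctan (1/2)) = 4/3 := by
    rw [tan_two_mul, tan_arctan]; norm_num
  rw [← h2, arctan_tan (by linarith [pi_pos]) (by linarith)]

lemma kh_facts {ω : ℝ} (hω : ω ∈ Set.Ioo (0:ℝ) (2 * arctan (1/2))) :
    0 < tan ω ∧ tan ω < 4/3 ∧ 0 < Real.cos ω ∧ ω < π/2 := by
  have h43 : ω < arctan (4/3) := kh_two_arctan_half ▸ hω.2
  have hpi : ω < π/2 := h43.trans (arctan_lt_pi_div_two _)
  have ht0 : 0 < tan ω := tan_pos_of_pos_of_lt_pi_div_two hω.1 hpi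
  have ht1 : tan ω < 4/3 := by
    have := tan_lt_tan_of_nonneg_of_lt_pi_div_two hω.1.le (arctan_lt_pi_div_two _) h43
    rwa [tan_arctan] at this
  have h0ω := hω.1
  exact ⟨ht0, ht1, Real.cos_pos_of_mem_Ioo ⟨by linarith [pi_pos], hpi⟩, hpi⟩

lemma kh_hasDerivAt {ω : ℝ} (hω : ω ∈ Set.Ioo (0:ℝ) (2 * arctan (1/2))) :
    HasDerivAt (fun ω => arccos ((3/4) * tan ω))
      (-(1 / Real.sqrt (1 - ((3/4) * tan ω)^2)) * ((3/4) * (1 / Real.cos ω ^ 2))) ω := by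
  obtain ⟨ht0, ht1, hc, _⟩ := kh_facts hω
  have hx1 : (3/4) * tan ω ≠ -1 := by nlinarith
  have hx2 : (3/4) * tan ω ≠ 1 := by nlinarith
  have hu : HasDerivAt (fun ω => (3/4) * tan ω) ((3/4) * (1 / Real.cos ω ^ 2)) ω :=
    (hasDerivAt_tan hc.ne').const_mul _
  have h := (hasDerivAt_arccos hx1 hx2).comp ω hu
  exact h

lemma kh_injOn {S : Set ℝ} (hS' : S ⊆ Set.Ioo 0 (2 * arctan (1/2))) :
    Set.InjOn (fun ω => arccos ((3/4) * tan ω)) S := by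
  intro a ha b hb hab
  obtain ⟨ha0, ha1, -, hapi⟩ := kh_facts (hS' ha)
  obtain ⟨hb0, hb1, -, hbpi⟩ := kh_facts (hS' hb)
  have h1 : Real.cos (arccos ((3/4) * tan a)) = (3/4) * tan a :=
    Real.cos_arccos (by linarith) (by linarith)
  have h2 : Real.cos (arccos ((3/4) * tan b)) = (3/4) * tan b :=
    Real.cos_arccos (by linarith) (by linarith)
  simp only at hab
  have htan : tan a = tan b := by
    rw [hab] at h1; rw [h2] at h1; linarith
  have hapos := (hS' ha).1
  have hbpos := (hS' hb).1
  exact Real.injOn_tan ⟨by linarith [pi_pos], hapi⟩ ⟨by linarith [pi_pos], hbpi⟩ htan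

lemma kh_image_eq {S : Set ℝ} (hS' : S ⊆ Set.Ioo 0 (2 * arctan (1/2))) :
    (fun ω => arccos ((3/4) * tan ω)) '' S
      = Set.Ioo 0 (π/2) ∩ {θ | arctan ((4/3) * |Real.cos θ|) ∈ S} := by
  ext θ
  simp only [Set.mem_image, Set.mem_inter_iff, Set.mem_Ioo, Set.mem_setOf_eq]
  constructor
  · rintro ⟨ω, hω, rfl⟩
    obtain ⟨ht0, ht1, -, -⟩ := kh_facts (hS' hω)
    have hωpos := (hS' hω).1
    have hωpi := (kh_facts (hS' hω)).2.2.2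
    have hx0 : (0:ℝ) < (3/4) * tan ω := by linarith
    have hx1 : (3/4) * tan ω < 1 := by linarith
    have hcos : Real.cos (arccos ((3/4) * tan ω)) = (3/4) * tan ω :=
      Real.cos_arccos (by linarith) hx1.le
    refine ⟨⟨arccos_pos.2 hx1, arccos_lt_pi_div_two.2 hx0⟩, ?_⟩
    rw [hcos, abs_of_pos hx0, show (4/3 : ℝ) * ((3/4) * tan ω) = tan ω by ring,
      arctan_tan (by linarith [pi_pos]) (by linarith)]
    exact hω
  · rintro ⟨⟨hθ0, hθpi⟩, hmem⟩
    refine ⟨arctan ((4/3) * |Real.cos θ|), hmem, ?_⟩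
    have hcpos : 0 < Real.cos θ := Real.cos_pos_of_mem_Ioo ⟨by linarith [pi_pos], hθpi⟩
    rw [tan_arctan, abs_of_pos hcpos,
      show (3/4 : ℝ) * ((4/3) * Real.cos θ) = Real.cos θ by ring,
      Real.arccos_cos hθ0.le (by linarith [pi_pos])]

lemma kh_density_eq {ω : ℝ} (hω : ω ∈ Set.Ioo (0:ℝ) (2 * arctan (1/2))) :
    (6 / π) * (1 / (Real.cos ω ^ 2 * Real.sqrt (16 - 9 * Real.tan ω ^ 2)))
      = |(-(1 / Real.sqrt (1 - ((3/4) * tan ω)^2)) * ((3/4) * (1 / Real.cos ω ^ 2)))| * (2/π) := by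
  obtain ⟨ht0, ht1, hc, -⟩ := kh_facts hω
  have h1 : (0:ℝ) < 1 - ((3/4) * tan ω)^2 := by nlinarith
  have h2 : Real.sqrt (16 - 9 * tan ω ^ 2) = 4 * Real.sqrt (1 - ((3/4) * tan ω)^2) := by
    rw [show (16 - 9 * tan ω ^ 2 : ℝ) = 4^2 * (1 - ((3/4) * tan ω)^2) by ring,
      Real.sqrt_mul (by positivity), Real.sqrt_sq (by norm_num)]
  have hs : 0 < Real.sqrt (1 - ((3/4) * tan ω)^2) := Real.sqrt_pos.2 h1
  rw [h2, abs_mul, abs_neg, abs_of_pos (by positivity), abs_of_pos (by positivity)]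
  have hπ := pi_pos
  field_simp
  ring

/-- The random variable `Ω = arctan((4/3)|cos θ|)`, with `θ` uniform on `[0, 2π)`,
has density `f(ω) = (6/π)/(cos(ω)²·√(16 - 9 tan(ω)²))` on `0 < ω < 2 arctan(1/2)`. -/
theorem keyhole_density (S : Set ℝ) (hS : MeasurableSet S)
    (hS' : S ⊆ Set.Ioo 0 (2 * arctan (1 / 2))) :
    (volume {θ ∈ Set.Ico (0 : ℝ) (2 * π) |
        arctan ((4 / 3) * |Real.cos θ|) ∈ S}).toReal / (2 * π) =
      ∫ ω in S, (6 / π) * (1 / (Real.cos ω ^ 2 * Real.sqrt (16 - 9 * Real.tan ω ^ 2))) := by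
  have hS'' : S ⊆ Set.Ioo 0 (2 * arctan (1/2)) := by norm_num at hS' ⊢; exact hS'
  set A : Set ℝ := Set.Ioo 0 (π/2) ∩ {θ | arctan ((4/3) * |Real.cos θ|) ∈ S} with hA
  have hAmeas : MeasurableSet A := by
    apply measurableSet_Ioo.inter
    exact hS.preimage ((Real.continuous_arctan.comp (continuous_const.mul Real.continuous_cos.abs)).measurable)
  -- the set in question decomposes into four congruent pieces
  have hTeq : {θ ∈ Set.Ico (0:ℝ) (2*π) | arctan ((4/3) * |Real.cos θ|) ∈ S}
      = A ∪ ((fun θ => π - θ) ⁻¹' A ∪ ((fun θ => θ - π) ⁻¹' A ∪ (fun θ => 2*π - θ) ⁻¹' A)) := by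
    ext θ
    simp only [hA, Set.mem_sep_iff, Set.mem_union, Set.mem_preimage, Set.mem_inter_iff,
      Set.mem_Ioo, Set.mem_Ico, Set.mem_setOf_eq, Real.cos_pi_sub, Real.cos_sub_pi,
      Real.cos_two_pi_sub, abs_neg]
    constructor
    · rintro ⟨⟨h0, h2π⟩, hmem⟩
      have habs1 : |Real.cos θ| < 1 := by
        have h := (hS'' hmem).2
        rw [kh_two_arctan_half] at h
        have h2 := arctan_strictMono.lt_iff_lt.1 h
        have := abs_nonneg (Real.cos θ)
        linarith
      have habs0 : 0 < |Real.cos θ| := by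
        have h := (hS'' hmem).1
        by_contra hcon
        push_neg at hcon
        have : |Real.cos θ| = 0 := le_antisymm hcon (abs_nonneg _)
        rw [this] at h
        simp at h
      rcases lt_trichotomy θ (π/2) with h1 | h1 | h1
      · have hθpos : 0 < θ := by
          rcases h0.lt_or_eq with h | h
          · exact h
          · exfalso; rw [← h] at habs1; simp at habs1
        exact Or.inl ⟨⟨hθpos, h1⟩, hmem⟩
      · exfalso; rw [h1] at habs0; simp at habs0
      · rcases lt_trichotomy θ π with h2 | h2 | h2
        · exact Or.inr (Or.inl ⟨⟨by linarith, by linarith⟩, hmem⟩)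
        · exfalso; rw [h2] at habs1; simp at habs1
        · rcases lt_trichotomy θ (3*π/2) with h3 | h3 | h3
          · exact Or.inr (Or.inr (Or.inl ⟨⟨by linarith, by linarith⟩, hmem⟩))
          · exfalso
            rw [h3] at habs0
            have : Real.cos (3*π/2) = 0 := by
              rw [show (3*π/2 : ℝ) = 2*π - π/2 by ring, Real.cos_two_pi_sub, Real.cos_pi_div_two]
            rw [this] at habs0; simp at habs0
          · exact Or.inr (Or.inr (Or.inr ⟨⟨by linarith, by linarith⟩, hmem⟩))
    · have hπ := pi_pos
      rintro (⟨⟨h1, h2⟩, hm⟩ | ⟨⟨h1, h2⟩, hm⟩ | ⟨⟨h1, h2⟩, hm⟩ | ⟨⟨h1, h2⟩, hm⟩)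
      · exact ⟨⟨by linarith, by linarith⟩, hm⟩
      · exact ⟨⟨by linarith, by linarith⟩, hm⟩
      · exact ⟨⟨by linarith, by linarith⟩, hm⟩
      · exact ⟨⟨by linarith, by linarith⟩, hm⟩
  -- volumes of the reflected/translated pieces
  have hvol_sub : ∀ c : ℝ, volume ((fun θ => c - θ) ⁻¹' A) = volume A := by
    intro c
    have : (fun θ : ℝ => c - θ) ⁻¹' A = -((fun h => c + h) ⁻¹' A) := by
      ext θ
      simp [Set.mem_neg, sub_eq_add_neg]
    rw [this, Measure.measure_neg, measure_preimage_add]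
  have hvol_C : volume ((fun θ : ℝ => θ - π) ⁻¹' A) = volume A := by
    simp only [sub_eq_add_neg]
    exact measure_preimage_add_right volume (-π) A
  -- subsets of disjoint intervals
  have hπ := pi_pos
  have hsubA : A ⊆ Set.Ioo 0 (π/2) := Set.inter_subset_left
  have hsubB : (fun θ => π - θ) ⁻¹' A ⊆ Set.Ioo (π/2) π := by
    intro θ hθ
    have := hsubA hθ
    simp only [Set.mem_Ioo] at this ⊢
    constructor <;> linarith [this.1, this.2]
  have hsubC : (fun θ : ℝ => θ - π) ⁻¹' A ⊆ Set.Ioo π (3*π/2) := by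
    intro θ hθ
    have := hsubA hθ
    simp only [Set.mem_Ioo] at this ⊢
    constructor <;> linarith [this.1, this.2]
  have hsubD : (fun θ => 2*π - θ) ⁻¹' A ⊆ Set.Ioo (3*π/2) (2*π) := by
    intro θ hθ
    have := hsubA hθ
    simp only [Set.mem_Ioo] at this ⊢
    constructor <;> linarith [this.1, this.2]
  have hBmeas : MeasurableSet ((fun θ : ℝ => π - θ) ⁻¹' A) :=
    hAmeas.preimage (measurable_const.sub measurable_id)
  have hCmeas : MeasurableSet ((fun θ : ℝ => θ - π) ⁻¹' A) :=
    hAmeas.preimage (measurable_id.sub measurable_const)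
  have hDmeas : MeasurableSet ((fun θ : ℝ => 2*π - θ) ⁻¹' A) :=
    hAmeas.preimage (measurable_const.sub measurable_id)
  have hdisj : ∀ {s t : Set ℝ} {a b c d : ℝ}, s ⊆ Set.Ioo a b → t ⊆ Set.Ioo c d → b ≤ c →
      Disjoint s t := by
    intro s t a b c d hs ht hbc
    rw [Set.disjoint_left]
    intro x hxs hxt
    have h1 := hs hxs
    have h2 := ht hxt
    simp only [Set.mem_Ioo] at h1 h2
    linarith [h1.2, h2.1]
  have hvolT : volume {θ ∈ Set.Ico (0:ℝ) (2*π) | arctan ((4/3) * |Real.cos θ|) ∈ S}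
      = volume A + (volume A + (volume A + volume A)) := by
    rw [hTeq, measure_union ?d1 (hBmeas.union (hCmeas.union hDmeas)),
      measure_union ?d2 (hCmeas.union hDmeas), measure_union ?d3 hDmeas,
      hvol_sub π, hvol_C, hvol_sub (2*π)]
    case d1 =>
      exact Disjoint.union_right (hdisj hsubA hsubB le_rfl)
        (Disjoint.union_right (hdisj hsubA hsubC (by linarith))
          (hdisj hsubA hsubD (by linarith)))
    case d2 =>
      exact Disjoint.union_right (hdisj hsubB hsubC le_rfl)
        (hdisj hsubB hsubD (by linarith))
    case d3 => exact hdisj hsubC hsubD le_rfl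
  have hAfin : volume A ≠ ⊤ := by
    have h := measure_mono (μ := volume) hsubA
    rw [Real.volume_Ioo] at h
    exact (h.trans_lt ENNReal.ofReal_lt_top).ne
  -- the change of variables
  have hCoV : ∫ x in (fun ω => arccos ((3/4) * tan ω)) '' S, (fun _ : ℝ => (2/π : ℝ)) x
      = ∫ ω in S, |(-(1 / Real.sqrt (1 - ((3/4) * tan ω)^2)) * ((3/4) * (1 / Real.cos ω ^ 2)))|
          • (2/π : ℝ) :=
    integral_image_eq_integral_abs_deriv_smul hS
      (fun x hx => (kh_hasDerivAt (hS'' hx)).hasDerivWithinAt) (kh_injOn hS'') _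
  rw [kh_image_eq hS''] at hCoV
  have hRHS : ∫ ω in S, (6 / π) * (1 / (Real.cos ω ^ 2 * Real.sqrt (16 - 9 * Real.tan ω ^ 2)))
      = (volume A).toReal * (2/π) := by
    rw [setIntegral_congr_fun hS (fun ω hω => kh_density_eq (hS'' hω))]
    have h1 : ∫ ω in S, |(-(1 / Real.sqrt (1 - ((3/4) * tan ω)^2)) * ((3/4) * (1 / Real.cos ω ^ 2)))|
        * (2/π : ℝ)
        = ∫ ω in S, |(-(1 / Real.sqrt (1 - ((3/4) * tan ω)^2)) * ((3/4) * (1 / Real.cos ω ^ 2)))|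
        • (2/π : ℝ) := by simp [smul_eq_mul]
    rw [h1, ← hCoV, ← hA, setIntegral_const, smul_eq_mul, measureReal_def]
  rw [hvolT, hRHS]
  rw [ENNReal.toReal_add hAfin (by simp [hAfin] : volume A + (volume A + volume A) ≠ ⊤),
    ENNReal.toReal_add hAfin (by simp [hAfin] : volume A + volume A ≠ ⊤),
    ENNReal.toReal_add hAfin hAfin]
  field_simp
  ring
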